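/- Let φ be an ordered edge coloring of K_n with vertex order v_1,…,v_n, inherited vertex coloring φ′, and let t be a color such that M_t(j) < (j+q)/2 for all j ∈ [q+1, n−1], where M_t(j) = |{i ≤ j : φ′(v_i) = t}|. Then there exists a cycle of length n − q in K_n containing no edge of color t. -/

import Mathlib

open SimpleGraph List

namespace Stmt9Aux

set_option linter.unusedSectionVars false

variable {V : Type*} [DecidableEq V]

def descWalk {N : ℕ} (f : Fin N → V) (hinj : Function.Injective f) :
    (k : ℕ) → (h : k < N) →
      (⊤ : SimpleGraph V).Walk (f ⟨k, h⟩) (f ⟨0, Nat.lt_of_le_of_lt (Nat.zero_le _) h⟩)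
  | 0, _ => SimpleGraph.Walk.nil
  | (k+1), h =>
      SimpleGraph.Walk.cons
        (by
          rw [SimpleGraph.top_adj]
          intro he
          have := hinj he
          rw [Fin.mk.injEq] at this
          omega)
        (descWalk f hinj k (by omega))

lemma descWalk_length {N : ℕ} (f : Fin N → V) (hinj : Function.Injective f) :
    ∀ (k : ℕ) (h : k < N), (descWalk f hinj k h).length = k
  | 0, _ => rfl
  | (k+1), h => by
      simp only [descWalk, SimpleGraph.Walk.length_cons, descWalk_length f hinj k]

lemma descWalk_mem_support {N : ℕ} (f : Fin N → V) (hinj : Function.Injective f) :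
    ∀ (k : ℕ) (h : k < N) (x : V), x ∈ (descWalk f hinj k h).support →
      ∃ j, ∃ hj : j < N, j ≤ k ∧ x = f ⟨j, hj⟩
  | 0, h, x, hx => by
      simp only [descWalk, SimpleGraph.Walk.support_nil, List.mem_singleton] at hx
      exact ⟨0, by omega, le_refl _, hx⟩
  | (k+1), h, x, hx => by
      simp only [descWalk, SimpleGraph.Walk.support_cons, List.mem_cons] at hx
      rcases hx with hx | hx
      · exact ⟨k+1, h, le_refl _, hx⟩
      · obtain ⟨j, hj, hjk, rfl⟩ := descWalk_mem_support f hinj k (by omega) x hx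
        exact ⟨j, hj, by omega, rfl⟩

lemma descWalk_mem_edges {N : ℕ} (f : Fin N → V) (hinj : Function.Injective f) :
    ∀ (k : ℕ) (h : k < N) (e : Sym2 V), e ∈ (descWalk f hinj k h).edges →
      ∃ j, ∃ hj : j + 1 < N, j + 1 ≤ k ∧
        e = s(f ⟨j + 1, hj⟩, f ⟨j, by omega⟩)
  | 0, h, e, he => by
      simp [descWalk] at he
  | (k+1), h, e, he => by
      simp only [descWalk, SimpleGraph.Walk.edges_cons, List.mem_cons] at he
      rcases he with he | he
      · exact ⟨k, h, le_refl _, he⟩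
      · obtain ⟨j, hj, hjk, rfl⟩ := descWalk_mem_edges f hinj k (by omega) e he
        exact ⟨j, hj, by omega, rfl⟩

lemma descWalk_isPath {N : ℕ} (f : Fin N → V) (hinj : Function.Injective f) :
    ∀ (k : ℕ) (h : k < N), (descWalk f hinj k h).IsPath
  | 0, _ => SimpleGraph.Walk.IsPath.nil
  | (k+1), h => by
      refine SimpleGraph.Walk.IsPath.cons (descWalk_isPath f hinj k (by omega)) ?_
      intro hx
      obtain ⟨j, hj, hjk, hxe⟩ := descWalk_mem_support f hinj k (by omega) _ hx
      have := hinj hxe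
      rw [Fin.mk.injEq] at this
      omega

lemma exists_cycle {N : ℕ} (hN : 3 ≤ N) (f : Fin N → V)
    (hinj : Function.Injective f) (P : Sym2 V → Prop)
    (hP : ∀ (a b : ℕ) (ha : a < N) (hb : b < N),
      (b = a + 1 ∨ (a = N - 1 ∧ b = 0)) → P s(f ⟨a, ha⟩, f ⟨b, hb⟩)) :
    ∃ (v : V) (c : (⊤ : SimpleGraph V).Walk v v),
      c.IsCycle ∧ c.length = N ∧ ∀ e ∈ c.edges, P e := by
  have h0 : 0 < N := by omega
  have hN1 : N - 1 < N := by omega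
  have hadj : (⊤ : SimpleGraph V).Adj (f ⟨0, h0⟩) (f ⟨N - 1, hN1⟩) := by
    rw [SimpleGraph.top_adj]
    intro he
    have := hinj he
    rw [Fin.mk.injEq] at this
    omega
  refine ⟨f ⟨0, h0⟩, SimpleGraph.Walk.cons hadj (descWalk f hinj (N-1) hN1), ?_, ?_, ?_⟩
  · rw [SimpleGraph.Walk.cons_isCycle_iff]
    refine ⟨descWalk_isPath f hinj _ _, ?_⟩
    intro he
    obtain ⟨j, hj, hjk, hee⟩ := descWalk_mem_edges f hinj (N-1) hN1 _ he
    rw [Sym2.eq_iff] at hee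
    rcases hee with ⟨h1, h2⟩ | ⟨h1, h2⟩
    · have := hinj h1; rw [Fin.mk.injEq] at this; omega
    · have e1 := hinj h1; rw [Fin.mk.injEq] at e1
      have e2 := hinj h2; rw [Fin.mk.injEq] at e2
      omega
  · simp [SimpleGraph.Walk.length_cons, descWalk_length]; omega
  · intro e he
    simp only [SimpleGraph.Walk.edges_cons, List.mem_cons] at he
    rcases he with rfl | he
    · have := hP (N-1) 0 hN1 h0 (Or.inr ⟨rfl, rfl⟩)
      rwa [Sym2.eq_swap] at this
    · obtain ⟨j, hj, hjk, rfl⟩ := descWalk_mem_edges f hinj (N-1) hN1 _ he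
      have := hP j (j+1) (by omega) hj (Or.inl rfl)
      rwa [Sym2.eq_swap] at this

section counting

variable {α : Type*} [LinearOrder α] [DecidableEq α]

lemma count_ge_of_sorted (s : Finset α) (p : ℕ) (hp : p < (s.sort (· ≤ ·)).length) :
    p + 1 ≤ (s.filter (· ≤ (s.sort (· ≤ ·)).get ⟨p, hp⟩)).card := by
  classical
  set L := s.sort (· ≤ ·) with hL
  have hnd : (L.take (p+1)).Nodup := (List.take_sublist _ _).nodup (s.sort_nodup _)
  have hsub : (L.take (p+1)).toFinset ⊆ s.filter (· ≤ L.get ⟨p, hp⟩) := by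
    intro x hx
    rw [List.mem_toFinset] at hx
    obtain ⟨j, hjlen, hxe⟩ := List.getElem_of_mem hx
    rw [List.getElem_take] at hxe
    rw [List.length_take] at hjlen
    subst hxe
    rw [Finset.mem_filter]
    refine ⟨(Finset.mem_sort _).1 (List.getElem_mem _), ?_⟩
    exact (s.pairwise_sort (· ≤ ·)).rel_get_of_le (by simp; omega)
  calc p + 1 = (L.take (p+1)).toFinset.card := by
        rw [List.toFinset_card_of_nodup hnd, List.length_take]; omega
    _ ≤ _ := Finset.card_le_card hsub

lemma count_lt_of_sorted (s : Finset α) (p : ℕ) (hp : p < (s.sort (· ≤ ·)).length) :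
    (s.filter (· < (s.sort (· ≤ ·)).get ⟨p, hp⟩)).card ≤ p := by
  classical
  set L := s.sort (· ≤ ·) with hL
  have hsub : s.filter (· < L.get ⟨p, hp⟩) ⊆ (L.take p).toFinset := by
    intro x hx
    rw [Finset.mem_filter] at hx
    obtain ⟨hxs, hxlt⟩ := hx
    have hxL : x ∈ L := (Finset.mem_sort _).2 hxs
    obtain ⟨j, hjlen, hxe⟩ := List.getElem_of_mem hxL
    have hjp : j < p := by
      by_contra hc
      push_neg at hc
      have := (s.pairwise_sort (· ≤ ·)).rel_get_of_le
        (show (⟨p, hp⟩ : Fin L.length) ≤ ⟨j, hjlen⟩ by simpa using hc)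
      rw [List.get_eq_getElem, List.get_eq_getElem] at this
      rw [hxe] at this
      exact absurd hxlt (by simp; exact this)
    rw [List.mem_toFinset]
    have : (L.take p)[j]'(by rw [List.length_take]; omega) = x := by
      rw [List.getElem_take]; exact hxe
    rw [← this]
    exact List.getElem_mem _
  calc (s.filter (· < L.get ⟨p, hp⟩)).card ≤ (L.take p).toFinset.card := Finset.card_le_card hsub
    _ ≤ (L.take p).length := (L.take p).toFinset_card_le
    _ ≤ p := by rw [List.length_take]; omega

end counting

end Stmt9Aux

open Stmt9Aux

/-- For an ordered edge coloring `φ` of `K_n` with inherited vertex coloring `φ'` and a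
color `t` with `M_t(j) < (j+q)/2` for all `j ∈ [q+1, n-1]` (stated as
`2 * M_t(j) < j + q`), there exists a cycle of length `n - q` with no edge of color `t`. -/
theorem stmt_9 (n q k : ℕ) (hnq : 3 ≤ n - q)
    (φ : Sym2 (Fin n) → Fin k) (φ' : Fin n → Fin k)
    (hord : ∀ i j : Fin n, i < j → φ s(i, j) = φ' i)
    (hlast : ∀ h : 2 ≤ n, φ' ⟨n - 1, by omega⟩ = φ' ⟨n - 2, by omega⟩)
    (t : Fin k)
    (hM : ∀ j : ℕ, q + 1 ≤ j → j ≤ n - 1 →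
      2 * (Finset.univ.filter (fun i : Fin n => i.val < j ∧ φ' i = t)).card < j + q) :
    ∃ (v : Fin n) (c : (⊤ : SimpleGraph (Fin n)).Walk v v),
      c.IsCycle ∧ c.length = n - q ∧ ∀ e ∈ c.edges, φ e ≠ t := by
  classical
  have hn : q + 3 ≤ n := by omega
  set N := n - q with hN
  -- bad and good vertices
  set bad : Finset (Fin n) := Finset.univ.filter (fun i => i.val < n - 1 ∧ φ' i = t) with hbad
  set good : Finset (Fin n) := Finset.univ.filter (fun i => ¬(i.val < n - 1 ∧ φ' i = t)) with hgood
  set B := bad.card with hB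
  have hcardsum : B + good.card = n := by
    rw [hB, hbad, hgood]
    rw [Finset.card_filter_add_card_filter_not]
    simp
  have hBbound : 2 * B ≤ n + q - 2 := by
    have h1 := hM (n - 1) (by omega) (le_refl _)
    have h2 : (Finset.univ.filter (fun i : Fin n => i.val < n - 1 ∧ φ' i = t)) = bad := rfl
    rw [h2] at h1
    omega
  have hBn : B ≤ n := by omega
  set r := B - q with hr
  set m := N - r with hm
  have hrm : r + m = N := by omega
  have hrltm : r + 1 ≤ m := by omega
  have hmgood : m ≤ good.card := by omega
  -- sorted lists
  set gsl := good.sort (· ≤ ·) with hGL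
  set asl := bad.sort (· ≤ ·) with hAL
  have hGLlen : gsl.length = good.card := good.length_sort _
  have hALlen : asl.length = B := bad.length_sort _
  -- accessors
  have hgix : ∀ j, j < m → j < gsl.length := by intro j hj; omega
  have haix : ∀ j, j < r → q + j < asl.length := by intro j hj; omega
  set g : (j : ℕ) → j < m → Fin n := fun j hj => gsl.get ⟨j, hgix j hj⟩ with hgdef
  set a : (j : ℕ) → j < r → Fin n := fun j hj => asl.get ⟨q + j, haix j hj⟩ with hadef
  have hg_good : ∀ j hj, g j hj ∈ good := by
    intro j hj
    exact (Finset.mem_sort _).1 (List.get_mem _ _)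
  have ha_bad : ∀ j hj, a j hj ∈ bad := by
    intro j hj
    exact (Finset.mem_sort _).1 (List.get_mem _ _)
  have hg_mono : ∀ j1 j2 (h1 : j1 < m) (h2 : j2 < m), j1 < j2 → g j1 h1 < g j2 h2 := by
    intro j1 j2 h1 h2 hlt
    exact good.sortedLT_sort.pairwise.rel_get_of_lt (by simpa using hlt)
  have hg_inj : ∀ j1 j2 (h1 : j1 < m) (h2 : j2 < m), g j1 h1 = g j2 h2 → j1 = j2 := by
    intro j1 j2 h1 h2 he
    rcases lt_trichotomy j1 j2 with h | h | h
    · exact absurd he (ne_of_lt (hg_mono j1 j2 h1 h2 h))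
    · exact h
    · exact absurd he.symm (ne_of_lt (hg_mono j2 j1 h2 h1 h))
  have ha_inj : ∀ j1 j2 (h1 : j1 < r) (h2 : j2 < r), a j1 h1 = a j2 h2 → j1 = j2 := by
    intro j1 j2 h1 h2 he
    have := (bad.sort_nodup (· ≤ ·)).get_inj_iff.1 he
    rw [Fin.mk.injEq] at this
    omega
  have hg_pi : ∀ j1 j2 (h1 : j1 < m) (h2 : j2 < m), j1 = j2 → g j1 h1 = g j2 h2 := by
    intro j1 j2 h1 h2 he
    subst he
    rfl
  have ha_pi : ∀ j1 j2 (h1 : j1 < r) (h2 : j2 < r), j1 = j2 → a j1 h1 = a j2 h2 := by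
    intro j1 j2 h1 h2 he
    subst he
    rfl
  have hdisj : ∀ x, x ∈ good → x ∈ bad → False := by
    intro x hxg hxb
    rw [hgood, Finset.mem_filter] at hxg
    rw [hbad, Finset.mem_filter] at hxb
    exact hxg.2 hxb.2
  -- the key inequality
  have hkey : ∀ j (hj : j < r) (hj1 : j + 1 < m), g (j+1) hj1 < a j hj := by
    intro j hj hj1
    set aj := a j hj with haj
    have haj_mem : aj ∈ bad := ha_bad j hj
    have haj_prop : aj.val < n - 1 ∧ φ' aj = t := by
      rw [hbad, Finset.mem_filter] at haj_mem; exact haj_mem.2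
    -- (b) lower bound on bads ≤ aj
    have hb1 : q + j + 1 ≤ (bad.filter (· ≤ aj)).card := count_ge_of_sorted bad (q + j) (haix j hj)
    -- identify the filter with the hM filter
    have hseteq : bad.filter (· ≤ aj) =
        Finset.univ.filter (fun x : Fin n => x.val < aj.val + 1 ∧ φ' x = t) := by
      ext x
      simp only [hbad, Finset.mem_filter, Finset.filter_filter, Finset.mem_univ, true_and]
      constructor
      · rintro ⟨⟨hx1, hx2⟩, hx3⟩
        exact ⟨by have := Fin.le_def.1 hx3; omega, hx2⟩
      · rintro ⟨hx1, hx2⟩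
        exact ⟨⟨by omega, hx2⟩, Fin.le_def.2 (by omega)⟩
    -- aj.val is at least q + j
    have hIic : (bad.filter (· ≤ aj)).card ≤ aj.val + 1 := by
      calc (bad.filter (· ≤ aj)).card ≤ (Finset.Iic aj).card := by
            apply Finset.card_le_card
            intro x hx
            rw [Finset.mem_filter] at hx
            rw [Finset.mem_Iic]
            exact hx.2
        _ = aj.val + 1 := Fin.card_Iic aj
    have hajq : q + j ≤ aj.val := by omega
    -- apply hM at aj.val + 1
    have hMaj := hM (aj.val + 1) (by omega) (by omega)
    rw [← hseteq] at hMaj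
    have hval : q + 2 * j + 2 ≤ aj.val := by omega
    -- (c) upper bound on bads below aj
    have hc1 : (bad.filter (· < aj)).card ≤ q + j := count_lt_of_sorted bad (q + j) (haix j hj)
    -- count all below aj
    have hall : (Finset.univ.filter (fun x : Fin n => x < aj)).card = aj.val := by
      have : Finset.univ.filter (fun x : Fin n => x < aj) = Finset.Iio aj := by
        ext x; simp [Finset.mem_Iio]
      rw [this, Fin.card_Iio]
    -- partition
    have hpart : (bad.filter (· < aj)).card + (good.filter (· < aj)).card = aj.val := by
      rw [← hall]
      have e1 : bad.filter (· < aj) =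
          (Finset.univ.filter (fun x : Fin n => x < aj)).filter
            (fun i => i.val < n - 1 ∧ φ' i = t) := by
        rw [hbad, Finset.filter_filter, Finset.filter_filter]
        apply Finset.filter_congr
        intro x _
        constructor
        · rintro ⟨h1, h2⟩; exact ⟨h2, h1⟩
        · rintro ⟨h1, h2⟩; exact ⟨h2, h1⟩
      have e2 : good.filter (· < aj) =
          (Finset.univ.filter (fun x : Fin n => x < aj)).filter
            (fun i => ¬(i.val < n - 1 ∧ φ' i = t)) := by
        rw [hgood, Finset.filter_filter, Finset.filter_filter]
        apply Finset.filter_congr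
        intro x _
        constructor
        · rintro ⟨h1, h2⟩; exact ⟨h2, h1⟩
        · rintro ⟨h1, h2⟩; exact ⟨h2, h1⟩
      rw [e1, e2]
      exact Finset.card_filter_add_card_filter_not _
    have hgoodbelow : j + 2 ≤ (good.filter (· < aj)).card := by omega
    -- (d) conclude
    by_contra hcon
    push_neg at hcon
    have hsub2 : good.filter (· < aj) ⊆ good.filter (· < g (j+1) hj1) := by
      intro x hx
      rw [Finset.mem_filter] at hx ⊢
      exact ⟨hx.1, lt_of_lt_of_le hx.2 hcon⟩
    have hcnt : (good.filter (· < g (j+1) hj1)).card ≤ j + 1 :=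
      count_lt_of_sorted good (j+1) (hgix (j+1) hj1)
    have hle := Finset.card_le_card hsub2
    omega
  -- the vertex function
  have hNval : 3 ≤ N := hnq
  set f : Fin N → Fin n := fun i =>
    if h2 : i.val < 2 * r then
      (if he : i.val % 2 = 0 then g (i.val / 2) (by omega) else a (i.val / 2) (by omega))
    else g (i.val - r) (by omega) with hfdef
  -- characterize f
  have hf_even : ∀ (iv : ℕ) (hiv : iv < N) (h2 : iv < 2 * r) (he : iv % 2 = 0),
      f ⟨iv, hiv⟩ = g (iv / 2) (by omega) := by
    intro iv hiv h2 he
    rw [hfdef]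
    simp only [Fin.val_mk]
    rw [dif_pos h2, dif_pos he]
  have hf_odd : ∀ (iv : ℕ) (hiv : iv < N) (h2 : iv < 2 * r) (he : iv % 2 = 1),
      f ⟨iv, hiv⟩ = a (iv / 2) (by omega) := by
    intro iv hiv h2 he
    rw [hfdef]
    simp only [Fin.val_mk]
    rw [dif_pos h2, dif_neg (by omega)]
  have hf_high : ∀ (iv : ℕ) (hiv : iv < N) (h2 : ¬(iv < 2 * r)),
      f ⟨iv, hiv⟩ = g (iv - r) (by omega) := by
    intro iv hiv h2
    rw [hfdef]
    simp only [Fin.val_mk]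
    rw [dif_neg h2]
  -- injectivity
  have hinj : Function.Injective f := by
    rintro ⟨iv1, h1⟩ ⟨iv2, h2⟩ heq
    rw [Fin.mk.injEq]
    by_cases c1 : iv1 < 2 * r
    · by_cases p1 : iv1 % 2 = 0
      · rw [hf_even iv1 h1 c1 p1] at heq
        by_cases c2 : iv2 < 2 * r
        · by_cases p2 : iv2 % 2 = 0
          · rw [hf_even iv2 h2 c2 p2] at heq
            have := hg_inj (iv1 / 2) (iv2 / 2) (by omega) (by omega) heq
            omega
          · rw [hf_odd iv2 h2 c2 (by omega)] at heq
            exact absurd (heq ▸ hg_good (iv1 / 2) (by omega))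
              (fun hgm => hdisj _ hgm (ha_bad (iv2 / 2) (by omega)))
        · rw [hf_high iv2 h2 c2] at heq
          have := hg_inj (iv1 / 2) (iv2 - r) (by omega) (by omega) heq
          omega
      · rw [hf_odd iv1 h1 c1 (by omega)] at heq
        by_cases c2 : iv2 < 2 * r
        · by_cases p2 : iv2 % 2 = 0
          · rw [hf_even iv2 h2 c2 p2] at heq
            exact absurd (heq.symm ▸ hg_good (iv2 / 2) (by omega))
              (fun hgm => hdisj _ hgm (ha_bad (iv1 / 2) (by omega)))
          · rw [hf_odd iv2 h2 c2 (by omega)] at heq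
            have := ha_inj (iv1 / 2) (iv2 / 2) (by omega) (by omega) heq
            omega
        · rw [hf_high iv2 h2 c2] at heq
          exact absurd (heq.symm ▸ hg_good (iv2 - r) (by omega))
            (fun hgm => hdisj _ hgm (ha_bad (iv1 / 2) (by omega)))
    · rw [hf_high iv1 h1 c1] at heq
      by_cases c2 : iv2 < 2 * r
      · by_cases p2 : iv2 % 2 = 0
        · rw [hf_even iv2 h2 c2 p2] at heq
          have := hg_inj (iv1 - r) (iv2 / 2) (by omega) (by omega) heq
          omega
        · rw [hf_odd iv2 h2 c2 (by omega)] at heq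
          exact absurd (heq ▸ hg_good (iv1 - r) (by omega))
            (fun hgm => hdisj _ hgm (ha_bad (iv2 / 2) (by omega)))
      · rw [hf_high iv2 h2 c2] at heq
        have := hg_inj (iv1 - r) (iv2 - r) (by omega) (by omega) heq
        omega
  -- good vertices give non-t edges
  have hedge : ∀ x y : Fin n, x < y → x ∈ good → φ s(x, y) ≠ t ∧ φ s(y, x) ≠ t := by
    intro x y hlt hxg
    have hxval : x.val < n - 1 := by
      have := Fin.lt_def.1 hlt
      have := y.isLt
      omega
    rw [hgood, Finset.mem_filter] at hxg
    have hxt : φ' x ≠ t := by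
      intro hcon
      exact hxg.2 ⟨hxval, hcon⟩
    have h1 : φ s(x, y) = φ' x := hord x y hlt
    constructor
    · rw [h1]; exact hxt
    · rw [Sym2.eq_swap, h1]; exact hxt
  -- consecutive edges avoid t
  have hP : ∀ (ia ib : ℕ) (hia : ia < N) (hib : ib < N),
      (ib = ia + 1 ∨ (ia = N - 1 ∧ ib = 0)) →
      φ s(f ⟨ia, hia⟩, f ⟨ib, hib⟩) ≠ t := by
    intro ia ib hia hib hcase
    rcases hcase with rfl | ⟨rfl, rfl⟩
    · -- ib = ia + 1
      by_cases c1 : ia < 2 * r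
      · by_cases p1 : ia % 2 = 0
        · -- f ia = g (ia/2), f (ia+1) = a (ia/2)
          have hia1 : ia + 1 < 2 * r := by omega
          rw [hf_even ia hia c1 p1, hf_odd (ia + 1) hib hia1 (by omega)]
          have hidx : (ia + 1) / 2 = ia / 2 := by omega
          have hj : ia / 2 < r := by omega
          have hj1 : ia / 2 + 1 < m := by omega
          have hlt : g (ia / 2) (by omega) < a ((ia + 1) / 2) (by omega) := by
            have h1 : g (ia / 2) (by omega) < g (ia / 2 + 1) hj1 :=
              hg_mono (ia / 2) (ia / 2 + 1) (by omega) hj1 (by omega)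
            have h2 := hkey (ia / 2) hj hj1
            have h3 : a ((ia + 1) / 2) (by omega : (ia + 1) / 2 < r) = a (ia / 2) hj :=
              ha_pi ((ia + 1) / 2) (ia / 2) (by omega) hj (by omega)
            rw [h3]
            exact lt_trans h1 h2
          exact (hedge _ _ hlt (hg_good (ia / 2) (by omega))).1
        · -- f ia = a j, f (ia+1) = g (j+1)
          have hj : ia / 2 < r := by omega
          rw [hf_odd ia hia c1 (by omega)]
          have hj1 : ia / 2 + 1 < m := by omega
          have hfib : f ⟨ia + 1, hib⟩ = g (ia / 2 + 1) hj1 := by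
            by_cases c2 : ia + 1 < 2 * r
            · rw [hf_even (ia + 1) hib c2 (by omega)]
              exact hg_pi ((ia + 1) / 2) (ia / 2 + 1) (by omega) hj1 (by omega)
            · rw [hf_high (ia + 1) hib c2]
              exact hg_pi (ia + 1 - r) (ia / 2 + 1) (by omega) hj1 (by omega)
          rw [hfib]
          have hlt := hkey (ia / 2) hj hj1
          exact (hedge _ _ hlt (hg_good (ia / 2 + 1) hj1)).2
      · -- both high
        have c2 : ¬(ia + 1 < 2 * r) := by omega
        rw [hf_high ia hia c1, hf_high (ia + 1) hib c2]
        have hlt : g (ia - r) (by omega) < g (ia + 1 - r) (by omega) :=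
          hg_mono (ia - r) (ia + 1 - r) (by omega) (by omega) (by omega)
        exact (hedge _ _ hlt (hg_good (ia - r) (by omega))).1
    · -- wrap: ia = N - 1, ib = 0
      have hN1high : ¬((N - 1) < 2 * r) := by omega
      rw [hf_high (N - 1) hia hN1high]
      have hf0 : f ⟨0, hib⟩ = g 0 (by omega) := by
        by_cases c0 : (0 : ℕ) < 2 * r
        · rw [hf_even 0 hib c0 (by omega)]
        · rw [hf_high 0 hib c0]
          exact hg_pi (0 - r) 0 (by omega) (by omega) (by omega)
      rw [hf0]
      have hlt : g 0 (by omega) < g (N - 1 - r) (by omega) :=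
        hg_mono 0 (N - 1 - r) (by omega) (by omega) (by omega)
      exact (hedge _ _ hlt (hg_good 0 (by omega))).2
  obtain ⟨v, c, hc1, hc2, hc3⟩ := exists_cycle hNval f hinj (fun e => φ e ≠ t) hP
  exact ⟨v, c, hc1, hc2, hc3⟩
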